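/- Let V : (0,∞) → ℝ be continuous with |V(r)| ≲ ⟨r⟩^{−6}, and let L_V = −∂_r² + 2/r² + V on L²(0,∞). If φ₀ is a bounded solution of L_V φ₀ = 0, then |φ₀(r)| ≲ r^{−1} as r → ∞ and |φ₀(r)| ≲ r² as r → 0; in particular φ₀ ∈ L²(0,∞), so a zero-energy resonance (bounded non-L² zero mode) is impossible for L_V. -/

import Mathlib

open Real Set MeasureTheory

set_option maxHeartbeats 2000000 in
/-- A bounded zero-energy solution of `L_V = -∂_r² + 2/r² + V` with `|V(r)| ≲ ⟨r⟩⁻⁶`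
decays like `r⁻¹` at infinity, like `r²` at the origin, and lies in `L²(0,∞)`;
in particular there is no zero-energy resonance. -/
theorem stmt13 (V φ : ℝ → ℝ) (C₀ M : ℝ)
    (hVc : ContinuousOn V (Set.Ioi 0))
    (hV : ∀ r > (0:ℝ), |V r| ≤ C₀ / (1 + r)^6)
    (hsmooth : ContDiffOn ℝ 2 φ (Set.Ioi 0))
    (heq : ∀ r ∈ Set.Ioi (0:ℝ),
      -(deriv (deriv φ) r) + (2/r^2) * φ r + V r * φ r = 0)
    (hbdd : ∀ r > (0:ℝ), |φ r| ≤ M) :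
    (∃ C₁ R : ℝ, 0 < R ∧ ∀ r ≥ R, |φ r| ≤ C₁ / r) ∧
    (∃ C₂ ε : ℝ, 0 < ε ∧ ∀ r ∈ Set.Ioo (0:ℝ) ε, |φ r| ≤ C₂ * r^2) ∧
    IntegrableOn (fun r : ℝ => (φ r)^2) (Set.Ioi 0) := by
  have hM0 : 0 ≤ M := le_trans (abs_nonneg _) (hbdd 1 one_pos)
  have hC0 : 0 ≤ C₀ := by
    have h := hV 1 one_pos
    have h2 : (0:ℝ) ≤ C₀ / (1+1)^6 := le_trans (abs_nonneg _) h
    nlinarith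
  have hopen : IsOpen (Set.Ioi (0:ℝ)) := isOpen_Ioi
  have hφc : ContinuousOn φ (Set.Ioi 0) := hsmooth.continuousOn
  have hd1 : ContDiffOn ℝ 1 (deriv φ) (Set.Ioi 0) :=
    hsmooth.deriv_of_isOpen hopen (by norm_num)
  have hφ'c : ContinuousOn (deriv φ) (Set.Ioi 0) := hd1.continuousOn
  have hdφ : ∀ r ∈ Set.Ioi (0:ℝ), HasDerivAt φ (deriv φ r) r := fun r hr =>
    ((hsmooth.differentiableOn (by norm_num)).differentiableAt (hopen.mem_nhds hr)).hasDerivAt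
  have hdφ' : ∀ r ∈ Set.Ioi (0:ℝ), HasDerivAt (deriv φ) (deriv (deriv φ) r) r := fun r hr =>
    ((hd1.differentiableOn (by norm_num)).differentiableAt (hopen.mem_nhds hr)).hasDerivAt
  have heq' : ∀ r ∈ Set.Ioi (0:ℝ), deriv (deriv φ) r = (2/r^2) * φ r + V r * φ r := by
    intro r hr; have := heq r hr; linarith
  set w : ℝ → ℝ := fun r => r^2 * deriv φ r - 2*r*φ r with hw_def
  set v : ℝ → ℝ := fun r => deriv φ r / r + φ r / r^2 with hv_def
  -- derivative of w
  have hdw : ∀ r ∈ Set.Ioi (0:ℝ), HasDerivAt w (r^2 * (V r * φ r)) r := by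
    intro r hr
    have hr0 : (0:ℝ) < r := hr
    have h1 : HasDerivAt (fun s : ℝ => s^2 * deriv φ s)
        ((2:ℕ) * r^(2-1) * deriv φ r + r^2 * deriv (deriv φ) r) r :=
      (hasDerivAt_pow 2 r).mul (hdφ' r hr)
    have h2 : HasDerivAt (fun s : ℝ => 2*s*φ s)
        (2 * φ r + 2*r * deriv φ r) r := by
      have := ((hasDerivAt_id r).const_mul (2:ℝ)).mul (hdφ r hr)
      simp only [id_eq, id, mul_one] at this
      exact this
    have h3 := h1.sub h2
    have he : (2:ℕ) * r^(2-1) * deriv φ r + r^2 * deriv (deriv φ) r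
        - (2 * φ r + 2*r * deriv φ r) = r^2 * (V r * φ r) := by
      rw [heq' r hr]
      field_simp
      ring
    rw [he] at h3
    exact h3
  -- derivative of v
  have hdv : ∀ r ∈ Set.Ioi (0:ℝ), HasDerivAt v (V r * φ r / r) r := by
    intro r hr
    have hr0 : (0:ℝ) < r := hr
    have hrne : r ≠ 0 := ne_of_gt hr0
    have h1 : HasDerivAt (fun s : ℝ => deriv φ s / s)
        ((deriv (deriv φ) r * r - deriv φ r * 1) / r^2) r :=
      (hdφ' r hr).div (hasDerivAt_id r) hrne
    have h2 : HasDerivAt (fun s : ℝ => φ s / s^2)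
        ((deriv φ r * r^2 - φ r * ((2:ℕ) * r^(2-1))) / (r^2)^2) r :=
      (hdφ r hr).div (hasDerivAt_pow 2 r) (pow_ne_zero _ hrne)
    have h3 := h1.add h2
    have he : (deriv (deriv φ) r * r - deriv φ r * 1) / r^2
        + (deriv φ r * r^2 - φ r * ((2:ℕ) * r^(2-1))) / (r^2)^2 = V r * φ r / r := by
      rw [heq' r hr]
      field_simp
      ring
    rw [he] at h3
    exact h3
  -- the algebraic identities
  have hφ_id : ∀ r > (0:ℝ), φ r = (r^2 * v r - w r / r)/3 := by
    intro r hr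
    have hrne : r ≠ 0 := ne_of_gt hr
    simp only [hw_def, hv_def]
    field_simp
    ring
  have hw_id : ∀ r > (0:ℝ), r^2 * v r = 3 * φ r + w r / r := by
    intro r hr
    have hrne : r ≠ 0 := ne_of_gt hr
    simp only [hw_def, hv_def]
    field_simp
    ring
  -- the key comparison lemma
  have key : ∀ (F g H h : ℝ → ℝ) (a b : ℝ), 0 < a → a ≤ b →
      (∀ r ∈ Set.Ioi (0:ℝ), HasDerivAt F (g r) r) → ContinuousOn g (Set.Ioi 0) →
      (∀ r ∈ Set.Ioi (0:ℝ), HasDerivAt H (h r) r) → ContinuousOn h (Set.Ioi 0) →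
      (∀ s ∈ Set.Icc a b, |g s| ≤ h s) →
      |F b - F a| ≤ H b - H a := by
    intro F g H h a b ha hab hF hg hH hh hle
    have hsub : Set.uIcc a b ⊆ Set.Ioi (0:ℝ) := by
      rw [Set.uIcc_of_le hab]; exact fun x hx => lt_of_lt_of_le ha hx.1
    have hgi : IntervalIntegrable g volume a b := (hg.mono hsub).intervalIntegrable
    have hhi : IntervalIntegrable h volume a b := (hh.mono hsub).intervalIntegrable
    have e1 : ∫ s in a..b, g s = F b - F a :=
      intervalIntegral.integral_eq_sub_of_hasDerivAt (fun x hx => hF x (hsub hx)) hgi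
    have e2 : ∫ s in a..b, h s = H b - H a :=
      intervalIntegral.integral_eq_sub_of_hasDerivAt (fun x hx => hH x (hsub hx)) hhi
    rw [← e1, ← e2]
    calc |∫ s in a..b, g s| ≤ ∫ s in a..b, |g s| :=
          intervalIntegral.abs_integral_le_integral_abs hab
      _ ≤ ∫ s in a..b, h s := intervalIntegral.integral_mono_on hab hgi.abs hhi
          (fun x hx => hle x hx)
  -- continuity of the derivatives of w and v
  have hgwc : ContinuousOn (fun s : ℝ => s^2 * (V s * φ s)) (Set.Ioi 0) :=
    (continuous_pow 2).continuousOn.mul (hVc.mul hφc)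
  have hgvc : ContinuousOn (fun s : ℝ => V s * φ s / s) (Set.Ioi 0) :=
    (hVc.mul hφc).div continuousOn_id (fun x hx => ne_of_gt hx)
  -- pointwise bound on V φ
  have hVφ : ∀ s > (0:ℝ), |V s * φ s| ≤ C₀ * M / (1+s)^6 := by
    intro s hs
    rw [abs_mul]
    calc |V s| * |φ s| ≤ (C₀ / (1+s)^6) * M :=
          mul_le_mul (hV s hs) (hbdd s hs) (abs_nonneg _) (by positivity)
      _ = C₀ * M / (1+s)^6 := by ring
  -- antiderivatives
  have hH1 : ∀ r ∈ Set.Ioi (0:ℝ),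
      HasDerivAt (fun s : ℝ => -(C₀*M/3) * (s^3)⁻¹) (C₀*M*(r^4)⁻¹) r := by
    intro r hr
    have hrne : r ≠ 0 := ne_of_gt hr
    have h := ((hasDerivAt_pow 3 r).inv (pow_ne_zero _ hrne)).const_mul (-(C₀*M/3))
    refine h.congr_deriv ?_
    field_simp
    ring
  have hH2 : ∀ r ∈ Set.Ioi (0:ℝ),
      HasDerivAt (fun s : ℝ => (C₀*M/3) * s^3) (C₀*M*r^2) r := by
    intro r hr
    have h := (hasDerivAt_pow 3 r).const_mul (C₀*M/3)
    refine h.congr_deriv ?_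
    push_cast
    ring
  have hH3 : ∀ r ∈ Set.Ioi (0:ℝ),
      HasDerivAt (fun s : ℝ => -(C₀*M/6) * (s^6)⁻¹) (C₀*M*(r^7)⁻¹) r := by
    intro r hr
    have hrne : r ≠ 0 := ne_of_gt hr
    have h := ((hasDerivAt_pow 6 r).inv (pow_ne_zero _ hrne)).const_mul (-(C₀*M/6))
    refine h.congr_deriv ?_
    field_simp
    ring
  have hH4 : ∀ r ∈ Set.Ioi (0:ℝ),
      HasDerivAt (fun s : ℝ => C₀*M * Real.log s) (C₀*M/r) r := by
    intro r hr
    have h := (Real.hasDerivAt_log (ne_of_gt hr)).const_mul (C₀*M)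
    simpa [div_eq_mul_inv] using h
  have hH5 : ∀ (K : ℝ), ∀ r ∈ Set.Ioi (0:ℝ),
      HasDerivAt (fun s : ℝ => K * s) K r := by
    intro K r _
    simpa using (hasDerivAt_id r).const_mul K
  -- continuity of the comparison functions
  have hc1 : ContinuousOn (fun s : ℝ => C₀*M*(s^4)⁻¹) (Set.Ioi 0) := by
    exact continuousOn_const.mul ((continuous_pow 4).continuousOn.inv₀
      (fun x hx => pow_ne_zero _ (ne_of_gt hx)))
  have hc2 : ContinuousOn (fun s : ℝ => C₀*M*s^2) (Set.Ioi 0) :=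
    continuousOn_const.mul (continuous_pow 2).continuousOn
  have hc3 : ContinuousOn (fun s : ℝ => C₀*M*(s^7)⁻¹) (Set.Ioi 0) := by
    exact continuousOn_const.mul ((continuous_pow 7).continuousOn.inv₀
      (fun x hx => pow_ne_zero _ (ne_of_gt hx)))
  have hc4 : ContinuousOn (fun s : ℝ => C₀*M/s) (Set.Ioi 0) :=
    continuousOn_const.div continuousOn_id (fun x hx => ne_of_gt hx)
  -- regime bounds
  have hb1 : ∀ s ∈ Set.Ici (1:ℝ), |s^2 * (V s * φ s)| ≤ C₀*M*(s^4)⁻¹ := by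
    intro s hs
    have hs0 : (0:ℝ) < s := lt_of_lt_of_le one_pos hs
    have h6 : s^6 ≤ (1+s)^6 := pow_le_pow_left₀ hs0.le (by linarith) 6
    have h := hVφ s hs0
    rw [abs_mul, abs_pow, abs_of_pos hs0]
    calc s^2 * |V s * φ s| ≤ s^2 * (C₀*M/(1+s)^6) := by
          exact mul_le_mul_of_nonneg_left h (by positivity)
      _ ≤ s^2 * (C₀*M/s^6) := by gcongr
      _ = C₀*M*(s^4)⁻¹ := by
          have hsne : s ≠ 0 := ne_of_gt hs0
          field_simp
  have hb2 : ∀ s ∈ Set.Ioi (0:ℝ), |s^2 * (V s * φ s)| ≤ C₀*M*s^2 := by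
    intro s hs0
    have hs : (0:ℝ) < s := hs0
    have h6 : (1:ℝ) ≤ (1+s)^6 := one_le_pow₀ (by linarith)
    have h := hVφ s hs
    rw [abs_mul, abs_pow, abs_of_pos hs]
    calc s^2 * |V s * φ s| ≤ s^2 * (C₀*M/(1+s)^6) := by
          exact mul_le_mul_of_nonneg_left h (by positivity)
      _ ≤ s^2 * (C₀*M/1) := by gcongr
      _ = C₀*M*s^2 := by ring
  have hb3 : ∀ s ∈ Set.Ici (1:ℝ), |V s * φ s / s| ≤ C₀*M*(s^7)⁻¹ := by
    intro s hs
    have hs0 : (0:ℝ) < s := lt_of_lt_of_le one_pos hs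
    have h6 : s^6 ≤ (1+s)^6 := pow_le_pow_left₀ hs0.le (by linarith) 6
    have h := hVφ s hs0
    rw [abs_div, abs_of_pos hs0]
    calc |V s * φ s| / s ≤ (C₀*M/(1+s)^6) / s := by gcongr
      _ ≤ (C₀*M/s^6) / s := by gcongr
      _ = C₀*M*(s^7)⁻¹ := by rw [div_div, ← pow_succ, div_eq_mul_inv]
  have hb4 : ∀ s ∈ Set.Ioi (0:ℝ), |V s * φ s / s| ≤ C₀*M/s := by
    intro s hs0
    have hs : (0:ℝ) < s := hs0
    have h6 : (1:ℝ) ≤ (1+s)^6 := one_le_pow₀ (by linarith)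
    have h := hVφ s hs
    rw [abs_div, abs_of_pos hs]
    calc |V s * φ s| / s ≤ (C₀*M/(1+s)^6) / s := by gcongr
      _ ≤ (C₀*M/1) / s := by gcongr
      _ = C₀*M/s := by ring
  -- bound on w at infinity
  set W : ℝ := |w 1| + C₀*M/3 with hW_def
  have hW0 : 0 ≤ W := by positivity
  have hwB : ∀ r ≥ (1:ℝ), |w r| ≤ W := by
    intro r hr
    have hr0 : (0:ℝ) < r := lt_of_lt_of_le one_pos hr
    have h := key w (fun s => s^2*(V s*φ s)) (fun s => -(C₀*M/3)*(s^3)⁻¹)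
      (fun s => C₀*M*(s^4)⁻¹) 1 r one_pos hr hdw hgwc hH1 hc1
      (fun s hs => hb1 s (mem_Ici.mpr hs.1))
    simp only [one_pow, inv_one, mul_one] at h
    have h3 : (0:ℝ) ≤ (C₀*M/3)*(r^3)⁻¹ := by positivity
    have h4 := abs_sub_abs_le_abs_sub (w r) (w 1)
    rw [hW_def]
    linarith
  -- bound on r^2 * v at infinity
  have hr2v : ∀ r ≥ (1:ℝ), |r^2 * v r| ≤ 3*M + W := by
    intro r hr
    have hr0 : (0:ℝ) < r := lt_of_lt_of_le one_pos hr
    rw [hw_id r hr0]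
    have h1 : |w r / r| ≤ W := by
      rw [abs_div, abs_of_pos hr0]
      refine le_trans ?_ (div_le_self hW0 hr)
      gcongr
      exact hwB r hr
    have h2 : |3 * φ r| ≤ 3*M := by
      rw [abs_mul, abs_of_pos (by norm_num : (0:ℝ) < 3)]
      linarith [hbdd r hr0]
    calc |3 * φ r + w r / r| ≤ |3 * φ r| + |w r / r| := abs_add_le _ _
      _ ≤ 3*M + W := add_le_add h2 h1
  -- decay of v at infinity
  have hvI : ∀ r ≥ (1:ℝ), |v r| ≤ C₀*M/6*(r^6)⁻¹ := by
    intro r hr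
    have hr0 : (0:ℝ) < r := lt_of_lt_of_le one_pos hr
    apply le_of_forall_pos_le_add
    intro ε hε
    set ρ := max r ((3*M + W + 1)/ε) with hρdef
    have hρr : r ≤ ρ := le_max_left _ _
    have hρ1 : (1:ℝ) ≤ ρ := le_trans hr hρr
    have hρ0 : (0:ℝ) < ρ := lt_of_lt_of_le one_pos hρ1
    have h := key v (fun s => V s*φ s/s) (fun s => -(C₀*M/6)*(s^6)⁻¹)
      (fun s => C₀*M*(s^7)⁻¹) r ρ hr0 hρr hdv hgvc hH3 hc3
      (fun s hs => hb3 s (mem_Ici.mpr (le_trans hr hs.1)))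
    have hvρ : |v ρ| ≤ (3*M + W)/ρ^2 := by
      have h2 := hr2v ρ hρ1
      rw [abs_mul, abs_pow, abs_of_pos hρ0] at h2
      rw [le_div_iff₀ (by positivity : (0:ℝ) < ρ^2), mul_comm]
      exact h2
    have hρε : (3*M + W)/ρ^2 ≤ ε := by
      have h5 : (3*M + W + 1)/ε ≤ ρ := le_max_right _ _
      rw [div_le_iff₀ hε] at h5
      rw [div_le_iff₀ (by positivity : (0:ℝ) < ρ^2)]
      nlinarith [mul_nonneg (mul_nonneg hε.le hρ0.le) (sub_nonneg.mpr hρ1)]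
    have hpos : (0:ℝ) ≤ (C₀*M/6)*(ρ^6)⁻¹ := by positivity
    have htri := abs_sub_abs_le_abs_sub (v r) (v ρ)
    rw [abs_sub_comm (v r) (v ρ)] at htri
    linarith
  -- Part 1 : decay of φ at infinity
  have part1 : ∀ r ≥ (1:ℝ), |φ r| ≤ ((C₀*M/6 + W)/3)/r := by
    intro r hr
    have hr0 : (0:ℝ) < r := lt_of_lt_of_le one_pos hr
    have hrne : r ≠ 0 := ne_of_gt hr0
    rw [hφ_id r hr0]
    have h1 : |r^2 * v r - w r / r| ≤ r^2 * |v r| + |w r|/r := by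
      calc |r^2 * v r - w r / r| ≤ |r^2 * v r| + |w r / r| := abs_sub _ _
        _ = r^2 * |v r| + |w r|/r := by rw [abs_mul, abs_div, abs_pow, abs_of_pos hr0]
    have e : r^2*(r^6)⁻¹ = (r^4)⁻¹ := by
      rw [show (6:ℕ)=2+4 from rfl, pow_add, mul_inv, ← mul_assoc,
        mul_inv_cancel₀ (pow_ne_zero 2 hrne), one_mul]
    have h2 : r^2 * |v r| ≤ (C₀*M/6) * r⁻¹ := by
      have h3 := hvI r hr
      have h4 : r^2 * |v r| ≤ r^2 * (C₀*M/6*(r^6)⁻¹) :=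
        mul_le_mul_of_nonneg_left h3 (by positivity)
      have h5 : r^2 * (C₀*M/6*(r^6)⁻¹) = (C₀*M/6) * (r^4)⁻¹ := by
        rw [mul_comm (C₀*M/6) _, ← mul_assoc, e]; ring
      have h6 : (C₀*M/6) * (r^4)⁻¹ ≤ (C₀*M/6) * r⁻¹ := by
        have h7 : (r^4)⁻¹ ≤ r⁻¹ := by
          exact inv_anti₀ hr0 (le_self_pow₀ hr (by norm_num))
        exact mul_le_mul_of_nonneg_left h7 (by positivity)
      linarith [h5 ▸ h4]
    have h8 : |w r|/r ≤ W * r⁻¹ := by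
      rw [← div_eq_mul_inv]
      gcongr
      exact hwB r hr
    have h9 : |(r^2 * v r - w r/r)/3| = |r^2*v r - w r/r|/3 := by
      rw [abs_div, abs_of_pos (by norm_num : (0:ℝ) < 3)]
    rw [h9]
    have h10 : ((C₀*M/6) * r⁻¹ + W * r⁻¹)/3 = ((C₀*M/6 + W)/3)/r := by
      rw [div_eq_mul_inv (_/3) r]
      ring
    linarith
  -- log-type bound on v near 0
  have hv0 : ∀ r ∈ Set.Ioc (0:ℝ) 1, |v r| ≤ |v 1| + C₀*M*(2/Real.sqrt r) := by
    rintro r ⟨hr0, hr1⟩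
    have h := key v (fun s => V s*φ s/s) (fun s => C₀*M*Real.log s) (fun s => C₀*M/s)
      r 1 hr0 hr1 hdv hgvc hH4 hc4
      (fun s hs => hb4 s (mem_Ioi.mpr (lt_of_lt_of_le hr0 hs.1)))
    simp only [Real.log_one, mul_zero] at h
    have hsr : 0 < Real.sqrt r := Real.sqrt_pos.mpr hr0
    have hlog : -Real.log r ≤ 2/Real.sqrt r := by
      have h1 : Real.log r = 2 * Real.log (Real.sqrt r) := by
        rw [Real.log_sqrt hr0.le]; ring
      have h2 : Real.log (Real.sqrt r)⁻¹ ≤ (Real.sqrt r)⁻¹ - 1 :=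
        Real.log_le_sub_one_of_pos (inv_pos.mpr hsr)
      rw [Real.log_inv] at h2
      rw [h1, div_eq_mul_inv]
      nlinarith [inv_pos.mpr hsr]
    have htri := abs_sub_abs_le_abs_sub (v r) (v 1)
    rw [abs_sub_comm (v r) (v 1)] at htri
    have : C₀*M*(-Real.log r) ≤ C₀*M*(2/Real.sqrt r) :=
      mul_le_mul_of_nonneg_left hlog (by positivity)
    linarith
  -- linear bound on w near 0
  set D : ℝ := |v 1| + 2*C₀*M + 3*M with hD_def
  have hD0 : 0 ≤ D := by positivity
  have hwlin : ∀ r ∈ Set.Ioc (0:ℝ) 1, |w r| ≤ D*r := by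
    rintro r ⟨hr0, hr1⟩
    have hrne : r ≠ 0 := ne_of_gt hr0
    have h' : w r / r = r^2*v r - 3*φ r := by linarith [hw_id r hr0]
    have hwr : w r = (r^2*v r - 3*φ r)*r := by rw [← h']; field_simp
    set t := Real.sqrt r with ht_def
    have ht0 : 0 < t := Real.sqrt_pos.mpr hr0
    have ht2 : t^2 = r := Real.sq_sqrt hr0.le
    have ht1 : t ≤ 1 := by
      rw [ht_def]
      exact Real.sqrt_le_one.mpr hr1
    have hvr := hv0 r ⟨hr0, hr1⟩
    have hr2v' : r^2 * |v r| ≤ |v 1| + 2*C₀*M := by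
      have h4 : r^2 * |v r| ≤ r^2 * (|v 1| + C₀*M*(2/t)) :=
        mul_le_mul_of_nonneg_left hvr (by positivity)
      have htne : t ≠ 0 := ne_of_gt ht0
      have e : r^2 * (|v 1| + C₀*M*(2/t)) = (|v 1|)*t^4 + 2*C₀*M*t^3 := by
        rw [← ht2]; field_simp
      rw [e] at h4
      have hA : (|v 1|)*t^4 ≤ |v 1| :=
        mul_le_of_le_one_right (abs_nonneg _) (pow_le_one₀ ht0.le ht1)
      have hB : 2*C₀*M*t^3 ≤ 2*C₀*M :=
        mul_le_of_le_one_right (by positivity) (pow_le_one₀ ht0.le ht1)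
      linarith
    have hφr := hbdd r hr0
    rw [hwr, abs_mul, abs_of_pos hr0]
    have h5 : |r^2*v r - 3*φ r| ≤ r^2*|v r| + 3*M := by
      calc |r^2*v r - 3*φ r| ≤ |r^2*v r| + |3*φ r| := abs_sub _ _
        _ ≤ r^2*|v r| + 3*M := by
            rw [abs_mul, abs_mul, abs_pow, abs_of_pos hr0,
              abs_of_pos (by norm_num : (0:ℝ) < 3)]
            linarith
    have h6 : |r^2*v r - 3*φ r| ≤ D := by rw [hD_def]; linarith
    exact mul_le_mul_of_nonneg_right h6 hr0.le
  -- cubic bound on w near 0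
  have hw0 : ∀ r ∈ Set.Ioc (0:ℝ) 1, |w r| ≤ C₀*M/3*r^3 := by
    rintro r ⟨hr0, hr1⟩
    apply le_of_forall_pos_le_add
    intro ε hε
    set r' := min (r/2) (ε/(D+1)) with hr'def
    have hr'0 : 0 < r' := lt_min (by linarith) (by positivity)
    have hr'r : r' ≤ r := le_trans (min_le_left _ _) (by linarith)
    have hr'1 : r' ≤ 1 := le_trans hr'r hr1
    have h := key w (fun s => s^2*(V s*φ s)) (fun s => C₀*M/3*s^3) (fun s => C₀*M*s^2)
      r' r hr'0 hr'r hdw hgwc hH2 hc2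
      (fun s hs => hb2 s (mem_Ioi.mpr (lt_of_lt_of_le hr'0 hs.1)))
    have h2 : |w r'| ≤ ε := by
      have h3 := hwlin r' ⟨hr'0, hr'1⟩
      have h4 : r' ≤ ε/(D+1) := min_le_right _ _
      have h5 : D*r' ≤ D*(ε/(D+1)) := mul_le_mul_of_nonneg_left h4 hD0
      have h6 : D*(ε/(D+1)) ≤ ε := by
        rw [mul_div_assoc', div_le_iff₀ (by linarith : (0:ℝ) < D+1)]
        nlinarith
      exact le_trans h3 (le_trans h5 h6)
    have htri := abs_sub_abs_le_abs_sub (w r) (w r')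
    have h7 : (0:ℝ) ≤ C₀*M/3*r'^3 := by positivity
    linarith
  -- intermediate r^(3/2) bound on φ near 0
  set K₁ : ℝ := (|v 1| + 2*C₀*M + C₀*M/3)/3 with hK₁_def
  have hK₁0 : 0 ≤ K₁ := by positivity
  have hφ32 : ∀ r ∈ Set.Ioc (0:ℝ) 1, |φ r| ≤ K₁*(Real.sqrt r * r) := by
    rintro r ⟨hr0, hr1⟩
    have hrne : r ≠ 0 := ne_of_gt hr0
    rw [hφ_id r hr0]
    set t := Real.sqrt r with ht_def
    have ht0 : 0 < t := Real.sqrt_pos.mpr hr0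
    have ht2 : t^2 = r := Real.sq_sqrt hr0.le
    have ht1 : t ≤ 1 := Real.sqrt_le_one.mpr hr1
    have h1 : |r^2 * v r - w r / r| ≤ r^2 * |v r| + |w r|/r := by
      calc |r^2 * v r - w r / r| ≤ |r^2 * v r| + |w r / r| := abs_sub _ _
        _ = r^2 * |v r| + |w r|/r := by rw [abs_mul, abs_div, abs_pow, abs_of_pos hr0]
    have hvr := hv0 r ⟨hr0, hr1⟩
    have h4 : r^2 * |v r| ≤ (|v 1|)*t^4 + 2*C₀*M*t^3 := by
      have h5 : r^2 * |v r| ≤ r^2 * (|v 1| + C₀*M*(2/t)) :=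
        mul_le_mul_of_nonneg_left hvr (by positivity)
      have e : r^2 * (|v 1| + C₀*M*(2/t)) = (|v 1|)*t^4 + 2*C₀*M*t^3 := by
        rw [← ht2]; field_simp
      linarith [e ▸ h5]
    have h6 : |w r|/r ≤ C₀*M/3*t^4 := by
      have h7 := hw0 r ⟨hr0, hr1⟩
      rw [div_le_iff₀ hr0]
      calc |w r| ≤ C₀*M/3*r^3 := h7
        _ = (C₀*M/3*t^4)*r := by rw [← ht2]; ring
    have h9 : |(r^2 * v r - w r/r)/3| = |r^2*v r - w r/r|/3 := by
      rw [abs_div, abs_of_pos (by norm_num : (0:ℝ) < 3)]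
    rw [h9]
    have e2 : t * r = t^3 := by rw [← ht2]; ring
    rw [e2, hK₁_def]
    have ht43 : t^4 ≤ t^3 := by nlinarith
    nlinarith [abs_nonneg (v 1)]
  -- uniform bound on v near 0
  have hvb : ∀ r ∈ Set.Ioc (0:ℝ) 1, |v r| ≤ |v 1| + C₀*K₁ := by
    rintro r ⟨hr0, hr1⟩
    have hble : ∀ s ∈ Set.Icc r 1, |V s * φ s / s| ≤ C₀*K₁ := by
      rintro s ⟨hs1, hs2⟩
      have hs0 : 0 < s := lt_of_lt_of_le hr0 hs1
      have hsne : s ≠ 0 := ne_of_gt hs0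
      have hts0 : 0 < Real.sqrt s := Real.sqrt_pos.mpr hs0
      have hts1 : Real.sqrt s ≤ 1 := Real.sqrt_le_one.mpr hs2
      have h1 : |V s * φ s| ≤ C₀ * (K₁*(Real.sqrt s * s)) := by
        rw [abs_mul]
        have hV1 : |V s| ≤ C₀ := by
          refine le_trans (hV s hs0) ?_
          rw [div_le_iff₀ (by positivity)]
          nlinarith [one_le_pow₀ (by linarith : (1:ℝ) ≤ 1+s) (n := 6)]
        exact mul_le_mul hV1 (hφ32 s ⟨hs0, hs2⟩) (abs_nonneg _) hC0
      rw [abs_div, abs_of_pos hs0, div_le_iff₀ hs0]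
      calc |V s * φ s| ≤ C₀ * (K₁*(Real.sqrt s * s)) := h1
        _ = (C₀*K₁*Real.sqrt s)*s := by ring
        _ ≤ (C₀*K₁)*s := mul_le_mul_of_nonneg_right
              (mul_le_of_le_one_right (mul_nonneg hC0 hK₁0) hts1) hs0.le
    have h := key v (fun s => V s*φ s/s) (fun s => (C₀*K₁)*s) (fun s => C₀*K₁)
      r 1 hr0 hr1 hdv hgvc (hH5 (C₀*K₁)) continuousOn_const hble
    simp only [mul_one] at h
    have htri := abs_sub_abs_le_abs_sub (v r) (v 1)
    rw [abs_sub_comm (v r) (v 1)] at htri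
    nlinarith [mul_nonneg (mul_nonneg hC0 hK₁0) hr0.le]
  -- Part 2 : quadratic bound on φ near 0
  have part2 : ∀ r ∈ Set.Ioo (0:ℝ) 1, |φ r| ≤ ((|v 1| + C₀*K₁ + C₀*M/3)/3) * r^2 := by
    rintro r ⟨hr0, hr1⟩
    have hrne : r ≠ 0 := ne_of_gt hr0
    rw [hφ_id r hr0]
    have h1 : |r^2 * v r - w r / r| ≤ r^2 * |v r| + |w r|/r := by
      calc |r^2 * v r - w r / r| ≤ |r^2 * v r| + |w r / r| := abs_sub _ _
        _ = r^2 * |v r| + |w r|/r := by rw [abs_mul, abs_div, abs_pow, abs_of_pos hr0]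
    have h2 : r^2 * |v r| ≤ (|v 1| + C₀*K₁)*r^2 := by
      have := hvb r ⟨hr0, hr1.le⟩
      nlinarith [sq_nonneg r]
    have h3 : |w r|/r ≤ C₀*M/3*r^2 := by
      rw [div_le_iff₀ hr0]
      calc |w r| ≤ C₀*M/3*r^3 := hw0 r ⟨hr0, hr1.le⟩
        _ = (C₀*M/3*r^2)*r := by ring
    have h9 : |(r^2 * v r - w r/r)/3| = |r^2*v r - w r/r|/3 := by
      rw [abs_div, abs_of_pos (by norm_num : (0:ℝ) < 3)]
    rw [h9]
    linarith
  -- assemble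
  set C₁ : ℝ := (C₀*M/6 + W)/3 with hC₁_def
  set C₂ : ℝ := (|v 1| + C₀*K₁ + C₀*M/3)/3 with hC₂_def
  have hC₁0 : 0 ≤ C₁ := by positivity
  have hC₂0 : 0 ≤ C₂ := by positivity
  have hsq : ContinuousOn (fun r : ℝ => (φ r)^2) (Set.Ioi 0) := hφc.pow 2
  refine ⟨⟨C₁, 1, one_pos, part1⟩, ⟨C₂, 1, one_pos, part2⟩, ?_⟩
  rw [show Set.Ioi (0:ℝ) = Set.Ioo 0 1 ∪ Set.Ici 1 from
    (Set.Ioo_union_Ici_eq_Ioi one_pos).symm]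
  apply MeasureTheory.IntegrableOn.union
  · -- on (0,1)
    have g1 : IntegrableOn (fun r : ℝ => C₂^2 * r^4) (Set.Ioo (0:ℝ) 1) :=
      ((continuous_const.mul (continuous_pow 4)).integrableOn_Icc (a := 0) (b := 1)).mono_set
        Set.Ioo_subset_Icc_self
    have hmeas1 : AEStronglyMeasurable (fun r : ℝ => (φ r)^2)
        (volume.restrict (Set.Ioo (0:ℝ) 1)) :=
      (hsq.mono (fun x hx => hx.1)).aestronglyMeasurable measurableSet_Ioo
    apply MeasureTheory.Integrable.mono' g1 hmeas1
    filter_upwards [ae_restrict_mem measurableSet_Ioo] with r hr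
    have hr0 : (0:ℝ) < r := hr.1
    have h := part2 r hr
    have h2 : |φ r|^2 ≤ (C₂*r^2)^2 := by
      apply pow_le_pow_left₀ (abs_nonneg _) h
    rw [Real.norm_eq_abs, abs_pow]
    calc |φ r|^2 ≤ (C₂*r^2)^2 := h2
      _ = C₂^2 * r^4 := by ring
  · -- on [1,∞)
    rw [integrableOn_Ici_iff_integrableOn_Ioi]
    have g2 : IntegrableOn (fun r : ℝ => C₁^2 * r^(-2:ℝ)) (Set.Ioi (1:ℝ)) :=
      (integrableOn_Ioi_rpow_of_lt (by norm_num) one_pos).const_mul _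
    have hmeas2 : AEStronglyMeasurable (fun r : ℝ => (φ r)^2)
        (volume.restrict (Set.Ioi (1:ℝ))) :=
      (hsq.mono (t := Set.Ioi (1:ℝ)) (fun x hx => mem_Ioi.mpr (lt_trans one_pos (mem_Ioi.mp hx)))).aestronglyMeasurable measurableSet_Ioi
    apply MeasureTheory.Integrable.mono' g2 hmeas2
    filter_upwards [ae_restrict_mem measurableSet_Ioi] with r hr
    have hr1 : (1:ℝ) < r := hr
    have hr0 : (0:ℝ) < r := lt_trans one_pos hr1
    have h := part1 r hr1.le
    have h2 : |φ r|^2 ≤ (C₁/r)^2 := pow_le_pow_left₀ (abs_nonneg _) h 2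
    have e : C₁^2 * r^(-2:ℝ) = (C₁/r)^2 := by
      have h3 : r^(-2:ℝ) = (r^2)⁻¹ := by
        rw [show (-2:ℝ) = -(2:ℕ) by norm_num, Real.rpow_neg hr0.le, Real.rpow_natCast]
      have hrne : r ≠ 0 := ne_of_gt hr0
      rw [h3, div_pow]
      simp only [hC₁_def]
      rw [div_pow, div_pow, ← div_eq_mul_inv]
    rw [Real.norm_eq_abs, abs_pow, e]
    exact h2
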